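/- Let g : (0,∞)⁴ → (0,∞) be a function of (σ², P, V, C) satisfying for all positive arguments and all λ > 0: (shares scaling) g(σ², λP, V/λ, C) = g(σ², P, V, C); (money scaling) g(σ², λP, V, λC) = g(σ², P, V, C); (time scaling) g(λσ², P, λV, C) = λ·g(σ², P, V, C). Then there exists a function f : (0,∞) → (0,∞) such that g(σ², P, V, C) = σ² · f(PV/(σ²C)) for all σ², P, V, C > 0. -/
import Mathlib

/-- If the number of trades `N = g(σ², P, V, C)` is a dimensionally invariant
positive function, then `g(σ², P, V, C) = σ² · f(PV/(σ²C))` for some positive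
function `f`. -/
theorem trading_activity_general_form
    (g : ℝ → ℝ → ℝ → ℝ → ℝ)
    (hpos : ∀ s P V C : ℝ, 0 < s → 0 < P → 0 < V → 0 < C → 0 < g s P V C)
    (hshares : ∀ s P V C lam : ℝ, 0 < s → 0 < P → 0 < V → 0 < C → 0 < lam →
      g s (lam * P) (V / lam) C = g s P V C)
    (hmoney : ∀ s P V C lam : ℝ, 0 < s → 0 < P → 0 < V → 0 < C → 0 < lam →
      g s (lam * P) V (lam * C) = g s P V C)
    (htime : ∀ s P V C lam : ℝ, 0 < s → 0 < P → 0 < V → 0 < C → 0 < lam →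
      g (lam * s) P (lam * V) C = lam * g s P V C) :
    ∃ f : ℝ → ℝ, (∀ t : ℝ, 0 < t → 0 < f t) ∧
      ∀ s P V C : ℝ, 0 < s → 0 < P → 0 < V → 0 < C →
        g s P V C = s * f (P * V / (s * C)) := by
  refine ⟨fun t => g 1 1 t 1, fun t ht => hpos 1 1 t 1 one_pos one_pos ht one_pos, ?_⟩
  intro s P V C hs hP hV hC
  have hVs : 0 < V / s := div_pos hV hs
  have hC' : 0 < (1:ℝ)/C := by positivity
  -- time scaling
  have h1 : g s P V C = s * g 1 P (V / s) C := by
    have := htime 1 P (V / s) C s one_pos hP hVs hC hs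
    rw [mul_one, mul_div_cancel₀ _ hs.ne'] at this
    exact this
  -- shares scaling: g 1 P (V/s) C = g 1 1 (P*(V/s)) C
  have h2 : g 1 P (V / s) C = g 1 1 (P * (V / s)) C := by
    have := hshares 1 1 (P * (V / s)) C P one_pos one_pos (by positivity) hC hP
    rw [mul_one, mul_div_cancel_left₀ _ hP.ne'] at this
    exact this
  -- money scaling: g 1 1 W C = g 1 (1/C) W 1
  have h3 : g 1 1 (P * (V / s)) C = g 1 (1/C) (P * (V / s)) 1 := by
    have := hmoney 1 (1/C) (P * (V / s)) 1 C one_pos hC' (by positivity) one_pos hC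
    rw [mul_one_div, div_self hC.ne', mul_one] at this
    exact this
  -- shares scaling: g 1 (1/C) W 1 = g 1 1 (W/C) 1
  have h4 : g 1 (1/C) (P * (V / s)) 1 = g 1 1 (P * (V / s) / C) 1 := by
    have := hshares 1 (1/C) (P * (V / s)) 1 C one_pos hC' (by positivity) one_pos hC
    rw [mul_one_div, div_self hC.ne'] at this
    exact this.symm
  rw [h1, h2, h3, h4]
  congr 1
  field_simp
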